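/- Let e ∈ X⁻ with ⟨e|e⟩ = 1 and let x ∈ H. Then {i·e, x, i·e} = x if and only if there exist a ∈ H and t ∈ ℝ with Ja = a, ⟨a|e⟩ = 0 and x = a − t·(i·e); moreover, for such x one has ‖x‖_sp = ‖a‖₂ + |t|. -/

import Mathlib

open scoped InnerProductSpace

/-- The inner product `⟨x|y⟩` of the paper: linear in `x`, conjugate-linear in `y`
(Mathlib's `⟪·,·⟫_ℂ` is conjugate-linear in the first variable). -/
noncomputable def sip {H : Type*} [NormedAddCommGroup H] [InnerProductSpace ℂ H]
    (x y : H) : ℂ := ⟪y, x⟫_ℂ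

/-- The spin factor triple product `{x,y,z} = ⟨x|y⟩z + ⟨z|y⟩x − ⟨x|Jz⟩Jy`
associated with a conjugation `J`. -/
noncomputable def tp {H : Type*} [NormedAddCommGroup H] [InnerProductSpace ℂ H]
    (J : H → H) (x y z : H) : H :=
  sip x y • z + sip z y • x - sip x (J z) • J y

/-- The spin norm `‖x‖_sp = √(⟨x|x⟩ + √(⟨x|x⟩² − |⟨x|Jx⟩|²))`. -/
noncomputable def spNorm {H : Type*} [NormedAddCommGroup H] [InnerProductSpace ℂ H]
    (J : H → H) (x : H) : ℝ :=
  Real.sqrt ((sip x x).re + Real.sqrt ((sip x x).re ^ 2 - ‖sip x (J x)‖ ^ 2))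

/-- Description of the self-adjoint part of the Peirce-2 space of the unitary tripotent
`i·e`, for a unit vector `e ∈ X⁻`: `{ie,x,ie} = x` iff `x = a − t•(ie)` with `a ∈ X⁻`,
`⟨a|e⟩ = 0` and `t ∈ ℝ`; for such `x` one has `‖x‖_sp = ‖a‖₂ + |t|`. -/
theorem stmt11 {H : Type*} [NormedAddCommGroup H] [InnerProductSpace ℂ H]
    (J : H → H)
    (hJadd : ∀ x y : H, J (x + y) = J x + J y)
    (hJsmul : ∀ (c : ℂ) (x : H), J (c • x) = (starRingEnd ℂ) c • J x)
    (hJiso : ∀ x : H, ‖J x‖ = ‖x‖)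
    (hJinv : ∀ x : H, J (J x) = x)
    (e : H) (he : J e = e) (hee : sip e e = 1) (x : H) :
    (tp J (Complex.I • e) x (Complex.I • e) = x ↔
      ∃ (a : H) (t : ℝ), J a = a ∧ sip a e = 0 ∧ x = a - (t : ℂ) • (Complex.I • e)) ∧
    (∀ (a : H) (t : ℝ), J a = a → sip a e = 0 → x = a - (t : ℂ) • (Complex.I • e) →
      spNorm J x = ‖a‖ + |t|) := by
  have hee' : ⟪e, e⟫_ℂ = 1 := hee
  set u : H := Complex.I • e with hu
  have hJu : J u = -u := by
    rw [hu, hJsmul, he, Complex.conj_I, neg_smul]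
  have huu : ⟪u, u⟫_ℂ = 1 := by
    rw [hu, inner_smul_left, inner_smul_right, hee', Complex.conj_I]
    simp [Complex.I_mul_I]
  have hune : u ≠ 0 := by
    intro h0
    rw [h0, inner_zero_left] at huu
    exact one_ne_zero huu.symm
  have hJsub : ∀ v w : H, J (v - w) = J v - J w := by
    intro v w
    have h1 : v - w = v + (-1 : ℂ) • w := by module
    rw [h1, hJadd, hJsmul]
    simp [sub_eq_add_neg]
  have hJreal : ∀ (s : ℝ) (v : H), J ((s : ℂ) • v) = (s : ℂ) • J v := by
    intro s v
    rw [hJsmul]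
    simp
  have htp : ∀ y : H, tp J u y u = (2 * ⟪y, u⟫_ℂ) • u + J y := by
    intro y
    have hs : sip u (J u) = -1 := by
      show ⟪J u, u⟫_ℂ = -1
      rw [hJu, inner_neg_left, huu]
    simp only [tp, hs]
    show (⟪y, u⟫_ℂ) • u + (⟪y, u⟫_ℂ) • u - (-1 : ℂ) • J y = (2 * ⟪y, u⟫_ℂ) • u + J y
    module
  constructor
  · constructor
    · intro h
      rw [htp x] at h
      set c : ℂ := ⟪x, u⟫_ℂ with hcdef
      have hJx : J x = x - (2 * c) • u := eq_sub_of_add_eq' h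
      have h2 : x = J x + (starRingEnd ℂ) (2 * c) • u := by
        calc x = J (J x) := (hJinv x).symm
          _ = J (x - (2 * c) • u) := by rw [hJx]
          _ = J x - (starRingEnd ℂ) (2 * c) • J u := by rw [hJsub, hJsmul]
          _ = J x + (starRingEnd ℂ) (2 * c) • u := by rw [hJu]; module
      have h3 : (2 * c) • u = (starRingEnd ℂ) (2 * c) • u := by
        have h4 : x + (2 * c) • u = x + (starRingEnd ℂ) (2 * c) • u := by
          conv_lhs => rw [h2, hJx]
          module
        exact add_left_cancel h4
      have h5 : (2 * c) = (starRingEnd ℂ) (2 * c) := by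
        have h6 : ((2 * c) - (starRingEnd ℂ) (2 * c)) • u = 0 := by
          rw [sub_smul, h3, sub_self]
        rcases smul_eq_zero.mp h6 with h7 | h7
        · exact sub_eq_zero.mp h7
        · exact absurd h7 hune
      have him : c.im = 0 := by
        have := congrArg Complex.im h5
        simp at this
        linarith
      have hcre : c = ((c.re : ℝ) : ℂ) := by
        apply Complex.ext <;> simp [him]
      have hconj : (starRingEnd ℂ) c = c := Complex.conj_eq_iff_im.mpr him
      refine ⟨x + ((-c.re : ℝ) : ℂ) • u, -c.re, ?_, ?_, ?_⟩
      · rw [hJadd, hJreal, hJu, hJx]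
        rw [hcre]
        simp only [Complex.ofReal_re]
        push_cast
        module
      · show ⟪e, x + ((-c.re : ℝ) : ℂ) • u⟫_ℂ = 0
        have h6 : c = Complex.I * ⟪x, e⟫_ℂ := by rw [hcdef, hu, inner_smul_right]
        have h7 : ⟪x, e⟫_ℂ = -Complex.I * c := by
          rw [h6]
          ring_nf
          rw [Complex.I_sq]
          ring
        have hex : ⟪e, x⟫_ℂ = Complex.I * c := by
          calc ⟪e, x⟫_ℂ = (starRingEnd ℂ) ⟪x, e⟫_ℂ := (inner_conj_symm e x).symm
            _ = (starRingEnd ℂ) (-Complex.I * c) := by rw [h7]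
            _ = Complex.I * (starRingEnd ℂ) c := by rw [map_mul]; simp
            _ = Complex.I * c := by rw [hconj]
        rw [inner_add_right, inner_smul_right, hu, inner_smul_right, hee', hex]
        rw [hcre]
        simp only [Complex.ofReal_re]
        push_cast
        ring
      · module
    · rintro ⟨a, t, hJa, hae0, rfl⟩
      rw [htp]
      have hae : ⟪e, a⟫_ℂ = 0 := hae0
      have hae' : ⟪a, e⟫_ℂ = 0 := by rw [← inner_conj_symm, hae, map_zero]
      have hxu : ⟪a - (t : ℂ) • u, u⟫_ℂ = -(t : ℂ) := by
        rw [inner_sub_left, inner_smul_left, huu, hu, inner_smul_right, hae']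
        simp
      rw [hxu, hJsub, hJa, hJreal, hJu]
      module
  · intro a t hJa hae0 hx
    have hae : ⟪e, a⟫_ℂ = 0 := hae0
    have hae' : ⟪a, e⟫_ℂ = 0 := by rw [← inner_conj_symm, hae, map_zero]
    have hau : ⟪a, u⟫_ℂ = 0 := by rw [hu, inner_smul_right, hae', mul_zero]
    have hua : ⟪u, a⟫_ℂ = 0 := by rw [← inner_conj_symm, hau, map_zero]
    have haa : ⟪a, a⟫_ℂ = ((‖a‖ ^ 2 : ℝ) : ℂ) := by
      rw [inner_self_eq_norm_sq_to_K]
      norm_cast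
    have hk1 : ⟪(t : ℂ) • u, a⟫_ℂ = 0 := by rw [inner_smul_left, hua, mul_zero]
    have hk2 : ⟪a, (t : ℂ) • u⟫_ℂ = 0 := by rw [inner_smul_right, hau, mul_zero]
    have hk3 : ⟪(t : ℂ) • u, (t : ℂ) • u⟫_ℂ = ((t ^ 2 : ℝ) : ℂ) := by
      rw [inner_smul_left, inner_smul_right, huu, Complex.conj_ofReal]
      push_cast
      ring
    have hxx : ⟪x, x⟫_ℂ = ((‖a‖ ^ 2 + t ^ 2 : ℝ) : ℂ) := by
      rw [hx, inner_sub_left, inner_sub_right, inner_sub_right, haa, hk1, hk2, hk3]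
      push_cast
      ring
    have hJx : J x = a + (t : ℂ) • u := by
      rw [hx, hJsub, hJa, hJreal, hJu]
      module
    have hJxx : ⟪J x, x⟫_ℂ = ((‖a‖ ^ 2 - t ^ 2 : ℝ) : ℂ) := by
      rw [hJx, inner_add_left, hx, inner_sub_right, inner_sub_right, haa, hk1, hk2, hk3]
      push_cast
      ring
    unfold spNorm
    have h1 : (sip x x).re = ‖a‖ ^ 2 + t ^ 2 := by
      rw [show sip x x = ⟪x, x⟫_ℂ from rfl, hxx, Complex.ofReal_re]
    have h2 : ‖sip x (J x)‖ = |‖a‖ ^ 2 - t ^ 2| := by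
      rw [show sip x (J x) = ⟪J x, x⟫_ℂ from rfl, hJxx, Complex.norm_real, Real.norm_eq_abs]
    rw [h1, h2]
    have ht2 : |t| ^ 2 = t ^ 2 := sq_abs t
    have h3 : (‖a‖ ^ 2 + t ^ 2) ^ 2 - |‖a‖ ^ 2 - t ^ 2| ^ 2 = (2 * ‖a‖ * |t|) ^ 2 := by
      rw [sq_abs]
      nlinarith [ht2]
    rw [h3, Real.sqrt_sq (by positivity)]
    have h4 : ‖a‖ ^ 2 + t ^ 2 + 2 * ‖a‖ * |t| = (‖a‖ + |t|) ^ 2 := by nlinarith [ht2]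
    rw [h4, Real.sqrt_sq (by positivity)]
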